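/- Let G : ℝᵖ → ℝ be Fréchet differentiable at a point v with ‖v‖ = 1, and let κ ∈ ℝᵖ satisfy ‖κ‖ = 1, ⟨v, κ⟩ = 0, and ⟨∇G(v), κ⟩ > 0. Define the sequence m_0 = κ and m_{k+1} = (v + m_k)/‖v + m_k‖. Then every m_k is well defined with ‖m_k‖ = 1, and there exists K such that G(m_K) > G(v). -/

import Mathlib

open RealInnerProductSpace

private lemma eq_one_of_sq_eq_one {x : ℝ} (hx : 0 ≤ x) (h : x ^ 2 = 1) : x = 1 := by
  have h2 : (x - 1) * (x + 1) = 0 := by ring_nf; linarith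
  rcases mul_eq_zero.1 h2 with h3 | h3
  · linarith
  · linarith

set_option maxHeartbeats 1000000

/-- Termination of the inner loop of the alternative PING iteration: if `G` is
differentiable at a unit vector `v`, and `κ` is a unit vector orthogonal to `v`
with `⟪∇G(v), κ⟫ > 0`, then the sequence `m 0 = κ`,
`m (k+1) = (v + m k)/‖v + m k‖` consists of well-defined unit vectors and
reaches a point where `G` exceeds `G v`. -/
theorem stmt_12 {p : ℕ} (G : EuclideanSpace ℝ (Fin p) → ℝ)
    (v κ : EuclideanSpace ℝ (Fin p))
    (hdiff : DifferentiableAt ℝ G v)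
    (hv : ‖v‖ = 1) (hκ : ‖κ‖ = 1) (horth : ⟪v, κ⟫ = 0)
    (hasc : 0 < ⟪gradient G v, κ⟫)
    (m : ℕ → EuclideanSpace ℝ (Fin p))
    (hm0 : m 0 = κ)
    (hrec : ∀ k, m (k + 1) = ‖v + m k‖⁻¹ • (v + m k)) :
    (∀ k, ‖m k‖ = 1) ∧ ∃ K, G v < G (m K) := by
  have hπ : (0:ℝ) < Real.pi := Real.pi_pos
  set θ : ℕ → ℝ := fun k => Real.pi / 2 ^ (k + 1) with hθdef
  have hθpos : ∀ k, 0 < θ k := fun k => by positivity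
  have hθlt : ∀ k, θ k ≤ Real.pi / 2 := by
    intro k
    apply div_le_div_of_nonneg_left hπ.le (by norm_num)
    calc (2:ℝ) = 2 ^ 1 := (pow_one 2).symm
    _ ≤ 2 ^ (k + 1) := pow_le_pow_right₀ one_le_two (by omega)
  -- norm of linear combinations
  have hcomb : ∀ a b : ℝ, ‖a • v + b • κ‖ ^ 2 = a ^ 2 + b ^ 2 := by
    intro a b
    rw [norm_add_sq_real, norm_smul, norm_smul, real_inner_smul_left,
      real_inner_smul_right, hv, hκ, horth]
    simp [sq_abs, mul_one]
  have hcomb1 : ∀ a b : ℝ, a ^ 2 + b ^ 2 = 1 → ‖a • v + b • κ‖ = 1 := by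
    intro a b hab
    exact eq_one_of_sq_eq_one (norm_nonneg _) (by rw [hcomb a b, hab])
  -- explicit formula for m k
  have hform : ∀ k, m k = Real.cos (θ k) • v + Real.sin (θ k) • κ := by
    intro k
    induction k with
    | zero =>
      simp [hm0, hθdef, Real.cos_pi_div_two, Real.sin_pi_div_two]
    | succ k ih =>
      have hθ2 : θ k = 2 * θ (k + 1) := by
        rw [hθdef]; field_simp; ring
      have hθhalf : θ (k + 1) < Real.pi / 2 := by
        show Real.pi / 2 ^ (k + 1 + 1) < Real.pi / 2
        apply div_lt_div_of_pos_left hπ two_pos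
        calc (2:ℝ) = 2 ^ 1 := (pow_one 2).symm
        _ < 2 ^ (k + 2) := pow_lt_pow_right₀ one_lt_two (by omega)
      have hcospos : 0 < Real.cos (θ (k + 1)) := by
        apply Real.cos_pos_of_mem_Ioo
        exact ⟨by linarith [hθpos (k + 1)], hθhalf⟩
      set t := θ (k + 1)
      have hvm : v + m k = (2 * Real.cos t) • (Real.cos t • v + Real.sin t • κ) := by
        rw [ih, hθ2, Real.cos_two_mul, Real.sin_two_mul]
        module
      have hunit : ‖Real.cos t • v + Real.sin t • κ‖ = 1 :=
        hcomb1 _ _ (by rw [← Real.sin_sq_add_cos_sq t]; ring)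
      rw [hrec k, hvm, norm_smul, hunit, mul_one, Real.norm_eq_abs,
        abs_of_pos (show (0:ℝ) < 2 * Real.cos t by linarith), smul_smul,
        inv_mul_cancel₀ (by linarith), one_smul]
  have hunitall : ∀ k, ‖m k‖ = 1 := by
    intro k
    rw [hform k]
    exact hcomb1 _ _ (by rw [← Real.sin_sq_add_cos_sq (θ k)]; ring)
  refine ⟨hunitall, ?_⟩
  -- gradient and little-o
  set g := gradient G v with hg
  set c := ⟪g, κ⟫ with hc
  set a := ⟪g, v⟫ with ha
  have hgrad : HasGradientAt G g v := hdiff.hasGradientAt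
  have hfd : HasFDerivAt G (InnerProductSpace.toDual ℝ _ g) v :=
    hasGradientAt_iff_hasFDerivAt.1 hgrad
  have hlo := Asymptotics.isLittleO_iff.1 hfd.isLittleO (show (0:ℝ) < c/4 by linarith)
  rw [Metric.eventually_nhds_iff] at hlo
  obtain ⟨δ, hδpos, hδ⟩ := hlo
  -- choose K
  set r := min δ (min 1 (c / (2 * (|a| + 1)))) with hr
  have hrpos : 0 < r := by
    apply lt_min hδpos
    apply lt_min one_pos
    positivity
  obtain ⟨K, hK⟩ := pow_unbounded_of_one_lt (Real.pi / r) (one_lt_two (α := ℝ))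
  have hθK : θ K < r := by
    have h2K : (0:ℝ) < 2 ^ K := by positivity
    have : Real.pi < r * 2 ^ K := by
      rw [div_lt_iff₀ hrpos] at hK; linarith
    show Real.pi / 2 ^ (K + 1) < r
    have h2K1 : (2:ℝ) ^ (K + 1) = 2 * 2 ^ K := by ring
    rw [h2K1, div_lt_iff₀ (by positivity)]
    nlinarith
  refine ⟨K, ?_⟩
  set t := θ K with ht
  have htpos : 0 < t := hθpos K
  have ht1 : t ≤ 1 := le_of_lt (lt_of_lt_of_le hθK ((min_le_right _ _).trans (min_le_left _ _)))
  have htδ : t < δ := lt_of_lt_of_le hθK (min_le_left _ _)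
  have hta : t < c / (2 * (|a| + 1)) :=
    lt_of_lt_of_le hθK ((min_le_right _ _).trans (min_le_right _ _))
  have hta' : 2 * t * (|a| + 1) < c := by
    rw [lt_div_iff₀ (by positivity)] at hta; linarith
  -- geometry at step K
  have hmv : m K - v = (Real.cos t - 1) • v + Real.sin t • κ := by
    rw [hform K, ← ht]
    have : v = (1:ℝ) • v := (one_smul ℝ v).symm
    conv_lhs => rw [this]
    rw [sub_smul]; module
  have hcos_le : Real.cos t ≤ 1 := Real.cos_le_one t
  have hcos_ge : 1 - t ^ 2 / 2 ≤ Real.cos t := Real.one_sub_sq_div_two_le_cos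
  have hnmv : ‖m K - v‖ ≤ t := by
    have hsq : ‖m K - v‖ ^ 2 = (Real.cos t - 1) ^ 2 + Real.sin t ^ 2 := by
      rw [hmv]; exact hcomb _ _
    have hsc := Real.sin_sq_add_cos_sq t
    have : ‖m K - v‖ ^ 2 ≤ t ^ 2 := by nlinarith
    nlinarith [norm_nonneg (m K - v)]
  have hinner : ⟪g, m K - v⟫ = (Real.cos t - 1) * a + Real.sin t * c := by
    rw [hmv, inner_add_right, real_inner_smul_right, real_inner_smul_right, ← ha, ← hc]
  have hsin : t / 2 ≤ Real.sin t := by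
    have := Real.sin_gt_sub_cube htpos
    nlinarith
  have hδ' := hδ (y := m K) (by
    rw [dist_eq_norm]
    exact lt_of_le_of_lt hnmv htδ)
  rw [InnerProductSpace.toDual_apply_apply] at hδ'
  have habs : |G (m K) - G v - ⟪g, m K - v⟫| ≤ c / 4 * t := by
    calc |G (m K) - G v - ⟪g, m K - v⟫| = ‖G (m K) - G v - ⟪g, m K - v⟫‖ := rfl
    _ ≤ c / 4 * ‖m K - v‖ := hδ'
    _ ≤ c / 4 * t := by nlinarith
  have h1 : G (m K) - G v ≥ ⟪g, m K - v⟫ - c / 4 * t := by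
    have := abs_le.1 habs
    linarith [this.1]
  rw [hinner] at h1
  have haa : -|a| ≤ a ∧ a ≤ |a| := abs_le.1 (le_refl |a|)
  have h2 : (Real.cos t - 1) * a ≥ -(t ^ 2 / 2) * |a| := by
    nlinarith [haa.1, haa.2, abs_nonneg a]
  have h3 : Real.sin t * c ≥ t / 2 * c := by nlinarith
  have habs0 : 0 ≤ |a| := abs_nonneg a
  have key : t * (2 * t * (|a| + 1)) < t * c := mul_lt_mul_of_pos_left hta' htpos
  nlinarith [key, mul_pos htpos htpos]
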